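/- arXiv:1511.04189 — 2 statements merged into one kernel-verified Lean document; each statement's English description precedes it below -/
import Mathlib

section
/- The Wirtinger derivatives act on the even basis of symplectic monogenics by: ∂_z s_{e,k}^h = h s_{e,k+1}^{h−1} for all integers k with −h ≤ k; ∂_{z̄} s_{e,k}^h = h s_{e,k}^{h−1} for k ≠ −h; and ∂_{z̄} s_{e,−h}^h = 0. In particular ∂_z and ∂_{z̄} preserve the kernel of the symplectic Dirac operator and lower homogeneity in (z, z̄) by one on these elements. -/
noncomputable section

open Complex Finset

/-- Points `(x, y, q)` of `ℝ³`. -/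
abbrev P3 := ℝ × ℝ × ℝ

/-- Partial derivative with respect to `x`. -/
def pdx (f : P3 → ℂ) : P3 → ℂ := fun p => deriv (fun t => f (t, p.2.1, p.2.2)) p.1

/-- Partial derivative with respect to `y`. -/
def pdy (f : P3 → ℂ) : P3 → ℂ := fun p => deriv (fun t => f (p.1, t, p.2.2)) p.2.1

/-- Partial derivative with respect to `q`. -/
def pdq (f : P3 → ℂ) : P3 → ℂ := fun p => deriv (fun t => f (p.1, p.2.1, t)) p.2.2

/-- The symplectic Dirac operator `D_s f = i q ∂_y f − ∂_x ∂_q f`. -/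
def Ds (f : P3 → ℂ) : P3 → ℂ := fun p =>
  Complex.I * (p.2.2 : ℂ) * pdy f p - pdx (pdq f) p

/-- The operator `X_s f = y ∂_q f + i x q f`. -/
def Xs (f : P3 → ℂ) : P3 → ℂ := fun p =>
  (p.2.1 : ℂ) * pdq f p + Complex.I * (p.1 : ℂ) * (p.2.2 : ℂ) * f p

/-- The Euler operator `E f = x ∂_x f + y ∂_y f`. -/
def Eul (f : P3 → ℂ) : P3 → ℂ := fun p =>
  (p.1 : ℂ) * pdx f p + (p.2.1 : ℂ) * pdy f p

/-- The complex coordinate `z = x + iy`. -/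
def zc (r : P3) : ℂ := (r.1 : ℂ) + Complex.I * (r.2.1 : ℂ)

/-- The complex coordinate `z̄ = x − iy`. -/
def zbc (r : P3) : ℂ := (r.1 : ℂ) - Complex.I * (r.2.1 : ℂ)

/-- The Wirtinger derivative `∂_z = (∂_x − i ∂_y)/2`. -/
def pdz (f : P3 → ℂ) : P3 → ℂ := fun p => (pdx f p - Complex.I * pdy f p) / 2

/-- The Wirtinger derivative `∂_{z̄} = (∂_x + i ∂_y)/2`. -/
def pdzbar (f : P3 → ℂ) : P3 → ℂ := fun p => (pdx f p + Complex.I * pdy f p) / 2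

/-- The physicists' Hermite polynomial `H_k(q) = (−1)^k e^{q²} (d/dq)^k e^{−q²}`. -/
def hermiteP (k : ℕ) (q : ℝ) : ℝ :=
  (-1 : ℝ) ^ k * Real.exp (q ^ 2) * (deriv^[k] fun t : ℝ => Real.exp (-t ^ 2)) q

/-- The `k`-th Hermite function `ψ_k(q) = (2^k k! √π)^{−1/2} e^{−q²/2} H_k(q)`. -/
def psiH (k : ℕ) (q : ℝ) : ℝ :=
  (Real.sqrt (2 ^ k * (Nat.factorial k : ℝ) * Real.sqrt Real.pi))⁻¹ *
    Real.exp (-q ^ 2 / 2) * hermiteP k q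

/-- The double factorial `m!!` of an integer, with the convention `m!! = 1` for `m ≤ 0`
(in particular `(−1)!! = 1`). -/
def dfac (m : ℤ) : ℝ := if m ≤ 0 then 1 else (Nat.doubleFactorial m.toNat : ℝ)

/-- The even basis element
`s_{e,k}^h = Σ_p √((2k+2p−1)!!/(2k+2p)!!) binom(h,p) ψ_{2k+2p}(q) z̄^{h−p} z^p`, where
the sum runs over `max(0, −k) ≤ p ≤ h` (i.e. over `0 ≤ p ≤ h` if `k ≥ 0`, and over
`|k| ≤ p ≤ h` if `−h ≤ k ≤ −1`). -/
def sE (h : ℕ) (k : ℤ) : P3 → ℂ := fun r =>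
  ∑ p ∈ Finset.Icc (-k).toNat h,
    (Real.sqrt (dfac (2 * k + 2 * (p : ℤ) - 1) / dfac (2 * k + 2 * (p : ℤ))) : ℂ) *
      (h.choose p : ℂ) * (psiH (2 * k + 2 * (p : ℤ)).toNat r.2.2 : ℂ) *
        (zbc r) ^ (h - p) * (zc r) ^ p

/-- The odd basis element
`s_{o,k}^h = Σ_{p=0}^h √((2k+2p)!!/(2k+2p+1)!!) binom(h,p) ψ_{2k+2p+1}(q) z̄^{h−p} z^p`. -/
def sO (h k : ℕ) : P3 → ℂ := fun r =>
  ∑ p ∈ Finset.range (h + 1),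
    (Real.sqrt ((Nat.doubleFactorial (2 * k + 2 * p) : ℝ) /
        (Nat.doubleFactorial (2 * k + 2 * p + 1) : ℝ)) : ℂ) *
      (h.choose p : ℂ) * (psiH (2 * k + 2 * p + 1) r.2.2 : ℂ) *
        (zbc r) ^ (h - p) * (zc r) ^ p
private lemma hasDerivAt_ofReal' (x : ℝ) : HasDerivAt (fun t : ℝ => (t : ℂ)) 1 x := by
  simpa using (hasDerivAt_id x).ofReal_comp

private lemma hd_pow {f : ℝ → ℂ} {A : ℂ} {x : ℝ} (hf : HasDerivAt f A x) (n : ℕ) :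
    HasDerivAt (fun t => f t ^ n) ((n : ℂ) * f x ^ (n - 1) * A) x := by
  induction n with
  | zero => simpa using hasDerivAt_const x (1 : ℂ)
  | succ n ih =>
    have h := ih.mul hf
    have e : (fun t => f t ^ (n + 1)) = fun t => f t ^ n * f t := by
      funext t; rw [pow_succ]
    rw [e]
    convert h using 1
    · rfl
    · rfl
    cases n with
    | zero => simp
    | succ m =>
      simp only [Nat.add_sub_cancel]
      push_cast
      ring_nf

private lemma hd_term {f g : ℝ → ℂ} {A B : ℂ} {x : ℝ} (c : ℂ) (m n : ℕ)
    (hf : HasDerivAt f A x) (hg : HasDerivAt g B x) :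
    HasDerivAt (fun t => c * f t ^ m * g t ^ n)
      (c * ((m : ℂ) * f x ^ (m - 1) * A * g x ^ n
        + (n : ℂ) * g x ^ (n - 1) * B * f x ^ m)) x := by
  have h := ((hd_pow hf m).mul (hd_pow hg n)).const_mul c
  have e : (fun t => c * f t ^ m * g t ^ n) =
      fun y => c * ((fun t => f t ^ m) * fun t => g t ^ n) y := by
    funext t; simp only [Pi.mul_apply]; ring
  rw [e]
  exact h.congr_deriv (by ring)

private lemma wirtinger_sE (h : ℕ) (k : ℤ) (r : P3) :
    pdz (sE h k) r = (∑ p ∈ Finset.Icc (-k).toNat h,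
      (Real.sqrt (dfac (2 * k + 2 * (p : ℤ) - 1) / dfac (2 * k + 2 * (p : ℤ))) : ℂ) *
        (h.choose p : ℂ) * (psiH (2 * k + 2 * (p : ℤ)).toNat r.2.2 : ℂ) *
          (p : ℂ) * (zbc r) ^ (h - p) * (zc r) ^ (p - 1))
  ∧ pdzbar (sE h k) r = ∑ p ∈ Finset.Icc (-k).toNat h,
      (Real.sqrt (dfac (2 * k + 2 * (p : ℤ) - 1) / dfac (2 * k + 2 * (p : ℤ))) : ℂ) *
        (h.choose p : ℂ) * (psiH (2 * k + 2 * (p : ℤ)).toNat r.2.2 : ℂ) *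
          ((h - p : ℕ) : ℂ) * (zbc r) ^ (h - p - 1) * (zc r) ^ p := by
  obtain ⟨x, y, q⟩ := r
  set a := (-k).toNat with ha
  have hfx : HasDerivAt (fun t : ℝ => (t : ℂ) - Complex.I * y) 1 x :=
    (hasDerivAt_ofReal' x).sub_const _
  have hgx : HasDerivAt (fun t : ℝ => (t : ℂ) + Complex.I * y) 1 x :=
    (hasDerivAt_ofReal' x).add_const _
  have hfy : HasDerivAt (fun t : ℝ => (x : ℂ) - Complex.I * t) (-Complex.I) y := by
    simpa using (((hasDerivAt_ofReal' y).const_mul Complex.I).const_sub (x:ℂ))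
  have hgy : HasDerivAt (fun t : ℝ => (x : ℂ) + Complex.I * t) Complex.I y := by
    simpa using (((hasDerivAt_ofReal' y).const_mul Complex.I).const_add (x:ℂ))
  have hX : HasDerivAt (fun t : ℝ => sE h k (t, y, q))
      (∑ p ∈ Finset.Icc a h,
        (Real.sqrt (dfac (2 * k + 2 * (p : ℤ) - 1) / dfac (2 * k + 2 * (p : ℤ))) : ℂ) *
          (h.choose p : ℂ) * (psiH (2 * k + 2 * (p : ℤ)).toNat q : ℂ) *
            (((h - p : ℕ) : ℂ) * ((x:ℂ) - Complex.I * y) ^ (h - p - 1) * 1 *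
                ((x:ℂ) + Complex.I * y) ^ p
              + (p : ℂ) * ((x:ℂ) + Complex.I * y) ^ (p - 1) * 1 *
                ((x:ℂ) - Complex.I * y) ^ (h - p))) x := by
    have e : (fun t : ℝ => sE h k (t, y, q)) = fun t : ℝ => ∑ p ∈ Finset.Icc a h,
        (Real.sqrt (dfac (2 * k + 2 * (p : ℤ) - 1) / dfac (2 * k + 2 * (p : ℤ))) : ℂ) *
          (h.choose p : ℂ) * (psiH (2 * k + 2 * (p : ℤ)).toNat q : ℂ) *
            ((t:ℂ) - Complex.I * y) ^ (h - p) * ((t:ℂ) + Complex.I * y) ^ p := by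
      funext t
      simp [sE, zbc, zc, a]
    rw [e]
    refine HasDerivAt.fun_sum fun p _ => ?_
    exact hd_term _ (h - p) p hfx hgx
  have hY : HasDerivAt (fun t : ℝ => sE h k (x, t, q))
      (∑ p ∈ Finset.Icc a h,
        (Real.sqrt (dfac (2 * k + 2 * (p : ℤ) - 1) / dfac (2 * k + 2 * (p : ℤ))) : ℂ) *
          (h.choose p : ℂ) * (psiH (2 * k + 2 * (p : ℤ)).toNat q : ℂ) *
            (((h - p : ℕ) : ℂ) * ((x:ℂ) - Complex.I * y) ^ (h - p - 1) * (-Complex.I) *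
                ((x:ℂ) + Complex.I * y) ^ p
              + (p : ℂ) * ((x:ℂ) + Complex.I * y) ^ (p - 1) * Complex.I *
                ((x:ℂ) - Complex.I * y) ^ (h - p))) y := by
    have e : (fun t : ℝ => sE h k (x, t, q)) = fun t : ℝ => ∑ p ∈ Finset.Icc a h,
        (Real.sqrt (dfac (2 * k + 2 * (p : ℤ) - 1) / dfac (2 * k + 2 * (p : ℤ))) : ℂ) *
          (h.choose p : ℂ) * (psiH (2 * k + 2 * (p : ℤ)).toNat q : ℂ) *
            ((x:ℂ) - Complex.I * t) ^ (h - p) * ((x:ℂ) + Complex.I * t) ^ p := by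
      funext t
      simp [sE, zbc, zc, a]
    rw [e]
    refine HasDerivAt.fun_sum fun p _ => ?_
    exact hd_term _ (h - p) p hfy hgy
  have hpx : pdx (sE h k) (x, y, q) = _ := hX.deriv
  have hpy : pdy (sE h k) (x, y, q) = _ := hY.deriv
  constructor
  · show (pdx (sE h k) (x,y,q) - Complex.I * pdy (sE h k) (x,y,q)) / 2 = _
    rw [hpx, hpy, Finset.mul_sum, ← Finset.sum_sub_distrib, Finset.sum_div]
    refine Finset.sum_congr rfl fun p hp => ?_
    simp only [zbc, zc]
    set c := (Real.sqrt (dfac (2 * k + 2 * (p : ℤ) - 1) / dfac (2 * k + 2 * (p : ℤ))) : ℂ) *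
          (h.choose p : ℂ) * (psiH (2 * k + 2 * (p : ℤ)).toNat q : ℂ) with hc
    set A := ((x:ℂ) - Complex.I * y) ^ (h - p - 1) * ((x:ℂ) + Complex.I * y) ^ p with hA
    set B := ((x:ℂ) + Complex.I * y) ^ (p - 1) * ((x:ℂ) - Complex.I * y) ^ (h - p) with hB
    linear_combination ((c * ((h - p : ℕ) : ℂ) * A - c * (p : ℂ) * B) / 2) * Complex.I_sq
  · show (pdx (sE h k) (x,y,q) + Complex.I * pdy (sE h k) (x,y,q)) / 2 = _
    rw [hpx, hpy, Finset.mul_sum, ← Finset.sum_add_distrib, Finset.sum_div]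
    refine Finset.sum_congr rfl fun p hp => ?_
    simp only [zbc, zc]
    set c := (Real.sqrt (dfac (2 * k + 2 * (p : ℤ) - 1) / dfac (2 * k + 2 * (p : ℤ))) : ℂ) *
          (h.choose p : ℂ) * (psiH (2 * k + 2 * (p : ℤ)).toNat q : ℂ) with hc
    set A := ((x:ℂ) - Complex.I * y) ^ (h - p - 1) * ((x:ℂ) + Complex.I * y) ^ p with hA
    set B := ((x:ℂ) + Complex.I * y) ^ (p - 1) * ((x:ℂ) - Complex.I * y) ^ (h - p) with hB
    linear_combination ((c * (p : ℂ) * B - c * ((h - p : ℕ) : ℂ) * A) / 2) * Complex.I_sq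

/-- The Wirtinger derivatives act on the even basis of symplectic monogenics by
`∂_z s_{e,k}^h = h s_{e,k+1}^{h−1}`, `∂_{z̄} s_{e,k}^h = h s_{e,k}^{h−1}` (for `k ≠ −h`),
and `∂_{z̄} s_{e,−h}^h = 0`; in particular they preserve the kernel of the symplectic
Dirac operator and lower homogeneity by one. -/
theorem wirtinger_on_even_basis (h : ℕ) (k : ℤ) (hk : -(h : ℤ) ≤ k) :
    (∀ p, pdz (sE h k) p = (h : ℂ) * sE (h - 1) (k + 1) p) ∧
    (k ≠ -(h : ℤ) → ∀ p, pdzbar (sE h k) p = (h : ℂ) * sE (h - 1) k p) ∧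
    (∀ p, pdzbar (sE h (-(h : ℤ))) p = 0) := by
  refine ⟨?_, ?_, ?_⟩
  · intro r
    rw [(wirtinger_sE h k r).1]
    cases h with
    | zero =>
      refine (Finset.sum_eq_zero fun p hp => ?_).trans (by simp)
      have hp0 : p = 0 := Nat.le_zero.mp (Finset.mem_Icc.mp hp).2
      subst hp0; simp
    | succ m =>
      set a' := (-(k+1)).toNat with ha'
      have hsub : Finset.Icc (a' + 1) (m + 1) ⊆ Finset.Icc (-k).toNat (m + 1) := by
        intro p hp
        simp only [Finset.mem_Icc] at hp ⊢
        omega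
      have hzero : ∀ p ∈ Finset.Icc (-k).toNat (m + 1),
          p ∉ Finset.Icc (a' + 1) (m + 1) →
          (Real.sqrt (dfac (2 * k + 2 * (p : ℤ) - 1) / dfac (2 * k + 2 * (p : ℤ))) : ℂ) *
            ((m+1).choose p : ℂ) * (psiH (2 * k + 2 * (p : ℤ)).toNat r.2.2 : ℂ) *
              (p : ℂ) * (zbc r) ^ (m + 1 - p) * (zc r) ^ (p - 1) = 0 := by
        intro p hp hnp
        simp only [Finset.mem_Icc] at hp hnp
        have hp0 : p = 0 := by omega
        subst hp0; simp
      rw [← Finset.sum_subset hsub hzero]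
      have hmap : Finset.Icc (a' + 1) (m + 1) =
          Finset.map (addLeftEmbedding 1) (Finset.Icc a' m) := by
        rw [Finset.map_add_left_Icc]
        congr 1 <;> omega
      rw [hmap, Finset.sum_map]
      rw [show sE (m + 1 - 1) (k + 1) r = sE m (k+1) r by norm_num, sE, Finset.mul_sum]
      refine Finset.sum_congr rfl fun p hp => ?_
      simp only [addLeftEmbedding_apply]
      have e1 : 2 * k + 2 * ((1 + p : ℕ) : ℤ) - 1 = 2 * (k+1) + 2 * (p : ℤ) - 1 := by
        push_cast; ring
      have e2 : 2 * k + 2 * ((1 + p : ℕ) : ℤ) = 2 * (k+1) + 2 * (p : ℤ) := by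
        push_cast; ring
      have e3 : m + 1 - (1 + p) = m - p := by omega
      have e4 : 1 + p - 1 = p := by omega
      rw [e1, e2, e3, e4]
      have hb : (1 + p) * Nat.choose (m + 1) (1 + p) = (m + 1) * Nat.choose m p := by
        rw [Nat.add_comm 1 p, Nat.mul_comm]
        exact (Nat.add_one_mul_choose_eq m p).symm
      have hbC : ((1 + p : ℕ) : ℂ) * (Nat.choose (m + 1) (1 + p) : ℂ)
          = ((m + 1 : ℕ) : ℂ) * (Nat.choose m p : ℂ) := by exact_mod_cast congrArg (Nat.cast : ℕ → ℂ) hb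
      push_cast at hbC ⊢
      linear_combination ((Real.sqrt (dfac (2 * (k+1) + 2 * (p : ℤ) - 1) /
        dfac (2 * (k+1) + 2 * (p : ℤ))) : ℂ) *
        (psiH (2 * (k+1) + 2 * (p : ℤ)).toNat r.2.2 : ℂ) *
        (zbc r) ^ (m - p) * (zc r) ^ p) * hbC
  · intro hkne r
    rw [(wirtinger_sE h k r).2]
    cases h with
    | zero =>
      refine (Finset.sum_eq_zero fun p hp => ?_).trans (by simp)
      have hp0 : p = 0 := Nat.le_zero.mp (Finset.mem_Icc.mp hp).2
      subst hp0; simp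
    | succ m =>
      have hale : (-k).toNat ≤ m := by omega
      rw [Finset.sum_Icc_succ_top (by omega : (-k).toNat ≤ m + 1)]
      rw [show sE (m + 1 - 1) k r = sE m k r by norm_num, sE, Finset.mul_sum]
      rw [show ((m+1) - (m+1) : ℕ) = 0 from by omega]
      simp only [Nat.cast_zero, mul_zero, zero_mul, add_zero]
      refine Finset.sum_congr rfl fun p hp => ?_
      have hpm : p ≤ m := (Finset.mem_Icc.mp hp).2
      have e3 : m + 1 - p - 1 = m - p := by omega
      rw [e3]
      have hb : Nat.choose (m+1) p * (m + 1 - p) = Nat.choose m p * (m + 1) :=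
        (Nat.choose_mul_succ_eq m p).symm
      have hbC : (Nat.choose (m+1) p : ℂ) * ((m + 1 - p : ℕ) : ℂ)
          = (Nat.choose m p : ℂ) * ((m + 1 : ℕ) : ℂ) := by
        exact_mod_cast congrArg (Nat.cast : ℕ → ℂ) hb
      push_cast at hbC ⊢
      linear_combination ((Real.sqrt (dfac (2 * k + 2 * (p : ℤ) - 1) /
        dfac (2 * k + 2 * (p : ℤ))) : ℂ) *
        (psiH (2 * k + 2 * (p : ℤ)).toNat r.2.2 : ℂ) *
        (zbc r) ^ (m - p) * (zc r) ^ p) * hbC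
  · intro r
    rw [(wirtinger_sE h (-(h:ℤ)) r).2]
    refine Finset.sum_eq_zero fun p hp => ?_
    have : p = h := by
      simp only [Finset.mem_Icc] at hp
      omega
    subst this
    simp
end
end

section
/- The operators H_t f = z̄∂_{z̄}f − z∂_z f + (1/2)(q² − ∂_q²)f, X_t f = i z̄ ∂_z f + (i/4)(q−∂_q)² f, and Y_t f = −i z ∂_{z̄} f + (i/4)(q+∂_q)² f act on the even basis of symplectic monogenics by: H_t s_{e,k}^h = (h + 2k + 1/2) s_{e,k}^h; X_t s_{e,k}^h = i(h+k+1) s_{e,k+1}^h; Y_t s_{e,k}^h = i(k − 1/2) s_{e,k−1}^h for k ≠ −h; and Y_t s_{e,−h}^h = 0 (for all integers k with −h ≤ k). -/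
noncomputable section

open Complex Finset

/-- The operator `q − ∂_q` (acting in the Schwartz variable). -/
def Qm (f : P3 → ℂ) : P3 → ℂ := fun p => (p.2.2 : ℂ) * f p - pdq f p

/-- The operator `q + ∂_q` (acting in the Schwartz variable). -/
def Qp (f : P3 → ℂ) : P3 → ℂ := fun p => (p.2.2 : ℂ) * f p + pdq f p

/-- The operator `H_t f = z̄∂_{z̄}f − z∂_z f + (1/2)(q² − ∂_q²)f`. -/
def Htc (f : P3 → ℂ) : P3 → ℂ := fun p =>
  zbc p * pdzbar f p - zc p * pdz f p +
    (1 / 2) * ((p.2.2 : ℂ) ^ 2 * f p - pdq (pdq f) p)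

/-- The operator `X_t f = i z̄ ∂_z f + (i/4)(q−∂_q)² f`. -/
def Xtc (f : P3 → ℂ) : P3 → ℂ := fun p =>
  Complex.I * zbc p * pdz f p + (Complex.I / 4) * Qm (Qm f) p

/-- The operator `Y_t f = −i z ∂_{z̄} f + (i/4)(q+∂_q)² f`. -/
def Ytc (f : P3 → ℂ) : P3 → ℂ := fun p =>
  -Complex.I * zc p * pdzbar f p + (Complex.I / 4) * Qp (Qp f) p


def PH : ℕ → Polynomial ℝ
  | 0 => 1
  | n + 1 => Polynomial.C 2 * (Polynomial.X * PH n) - (PH n).derivative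

lemma PH_derivative : ∀ n : ℕ, (PH n).derivative = Polynomial.C (2 * n : ℝ) * PH (n - 1) := by
  intro n
  induction n with
  | zero => simp [PH]
  | succ n ih =>
    cases n with
    | zero =>
      show (Polynomial.C 2 * (Polynomial.X * PH 0) - (PH 0).derivative).derivative = _
      simp [PH]
    | succ j =>
      show (Polynomial.C 2 * (Polynomial.X * PH (j+1)) - (PH (j+1)).derivative).derivative = _
      rw [Polynomial.derivative_sub, Polynomial.derivative_mul, Polynomial.derivative_mul,
        Polynomial.derivative_C, Polynomial.derivative_X, ih, Polynomial.derivative_mul,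
        Polynomial.derivative_C]
      simp only [Nat.add_sub_cancel]
      have hd2 : Polynomial.C 2 * (Polynomial.X * PH j) - (PH j).derivative = PH (j+1) := rfl
      have hc : Polynomial.C (2 * (((j:ℝ) + 1) + 1)) =
          Polynomial.C 2 + Polynomial.C (2 * ((j:ℝ)+1)) := by
        rw [← Polynomial.C_add]; ring_nf
      push_cast
      rw [hc]
      linear_combination (Polynomial.C (2*((j:ℝ)+1))) * hd2

lemma gauss_iter (n : ℕ) : (deriv^[n] fun t : ℝ => Real.exp (-t ^ 2)) =
    fun q => (-1 : ℝ) ^ n * (PH n).eval q * Real.exp (-q ^ 2) := by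
  induction n with
  | zero => funext q; simp [PH]
  | succ n ih =>
    rw [Function.iterate_succ_apply', ih]
    funext q
    have h1 : HasDerivAt (fun q : ℝ => (-1 : ℝ) ^ n * (PH n).eval q * Real.exp (-q ^ 2))
        ((-1:ℝ)^n * ((PH n).derivative.eval q * Real.exp (-q^2) +
          (PH n).eval q * (Real.exp (-q^2) * (-(2*q))))) q := by
      have hp : HasDerivAt (fun q : ℝ => (PH n).eval q) ((PH n).derivative.eval q) q :=
        (PH n).hasDerivAt q
      have he : HasDerivAt (fun q : ℝ => Real.exp (-q ^ 2)) (Real.exp (-q^2) * (-(2*q))) q := by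
        have : HasDerivAt (fun q : ℝ => -q ^ 2) (-(2*q)) q := by
          exact (hasDerivAt_pow 2 q).neg.congr_deriv (by norm_num)
        simpa [mul_comm] using this.exp
      simpa [mul_assoc, mul_add] using (hp.mul he).const_mul ((-1:ℝ)^n)
    rw [h1.deriv]
    have hPH : PH (n+1) = Polynomial.C 2 * (Polynomial.X * PH n) - (PH n).derivative := rfl
    rw [hPH]
    simp [Polynomial.eval_mul, Polynomial.eval_sub]
    ring

lemma hermiteP_eq' (n : ℕ) (q : ℝ) :
    (-1 : ℝ) ^ n * Real.exp (q ^ 2) * (deriv^[n] fun t : ℝ => Real.exp (-t ^ 2)) q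
      = (PH n).eval q := by
  rw [gauss_iter]
  have h1 : Real.exp (q^2) * Real.exp (-q^2) = 1 := by
    rw [← Real.exp_add]; simp
  have hs : ((-1:ℝ)^n) * ((-1:ℝ)^n) = 1 := by
    rw [← pow_add]; exact Even.neg_one_pow ⟨n, rfl⟩
  linear_combination (Real.exp (q^2) * Real.exp (-q^2) * (PH n).eval q) * hs +
    ((PH n).eval q) * h1

/-- normalizing constant -/
def cst (m : ℕ) : ℝ := (Real.sqrt (2 ^ m * (Nat.factorial m : ℝ) * Real.sqrt Real.pi))⁻¹

lemma psiH_eq (m : ℕ) (q : ℝ) : psiH m q = cst m * Real.exp (-q^2/2) * (PH m).eval q := by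
  rw [psiH, hermiteP, cst]
  rw [show (-1:ℝ)^m * Real.exp (q^2) * (deriv^[m] fun t : ℝ => Real.exp (-t^2)) q = (PH m).eval q
    from hermiteP_eq' m q]

lemma cst_succ (m : ℕ) : cst m = Real.sqrt (2 * m + 2) * cst (m + 1) := by
  have hb : (0:ℝ) < 2 ^ m * (Nat.factorial m : ℝ) * Real.sqrt Real.pi := by
    positivity
  have : (2:ℝ) ^ (m+1) * (Nat.factorial (m+1) : ℝ) * Real.sqrt Real.pi =
      (2 * m + 2) * (2 ^ m * (Nat.factorial m : ℝ) * Real.sqrt Real.pi) := by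
    push_cast [Nat.factorial_succ, pow_succ]
    ring
  have key : Real.sqrt ((2*(m:ℝ)+2) * (2 ^ m * (Nat.factorial m : ℝ) * Real.sqrt Real.pi)) =
      Real.sqrt (2*(m:ℝ)+2) * Real.sqrt (2 ^ m * (Nat.factorial m : ℝ) * Real.sqrt Real.pi) :=
    Real.sqrt_mul (by positivity) _
  rw [cst, cst, this, key, mul_inv, ← mul_assoc,
    mul_inv_cancel₀ (show Real.sqrt (2*(m:ℝ)+2) ≠ 0 by positivity), one_mul]

lemma cst_mul (m : ℕ) : 2 * (m:ℝ) * cst m = Real.sqrt (2 * m) * cst (m - 1) := by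
  cases m with
  | zero => simp
  | succ n =>
    have := cst_succ n
    simp only [Nat.add_sub_cancel]
    rw [this]
    push_cast
    rw [show (2:ℝ)*((n:ℝ)+1) = 2*(n:ℝ)+2 by ring, ← mul_assoc,
      Real.mul_self_sqrt (by positivity)]

lemma psiH_hasDerivAt (m : ℕ) (q : ℝ) :
    HasDerivAt (psiH m) (-q * psiH m q + Real.sqrt (2 * m) * psiH (m - 1) q) q := by
  have hfun : psiH m = fun q => cst m * Real.exp (-q^2/2) * (PH m).eval q := funext (psiH_eq m)
  rw [hfun]
  simp only [psiH_eq]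
  have he : HasDerivAt (fun q : ℝ => Real.exp (-q^2/2)) (Real.exp (-q^2/2) * (-q)) q := by
    have h0 : HasDerivAt (fun q : ℝ => -q^2/2) (-q) q := by
      have h1 := (hasDerivAt_pow 2 q).neg.div_const 2
      exact h1.congr_deriv (by norm_num; ring)
    simpa [mul_comm] using h0.exp
  have hp : HasDerivAt (fun q : ℝ => (PH m).eval q) ((PH m).derivative.eval q) q :=
    (PH m).hasDerivAt q
  have := ((he.const_mul (cst m)).mul hp)
  convert this using 1
  · rfl
  · rfl
  · rfl
  rw [PH_derivative m]
  simp only [Polynomial.eval_mul, Polynomial.eval_C]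
  have h2 := cst_mul m
  linear_combination (-(Real.exp (-q^2/2) * (PH (m-1)).eval q)) * h2

lemma psiH_diff (m : ℕ) : Differentiable ℝ (psiH m) :=
  fun q => (psiH_hasDerivAt m q).differentiableAt

lemma psiH_deriv (m : ℕ) (q : ℝ) :
    deriv (psiH m) q = -q * psiH m q + Real.sqrt (2 * m) * psiH (m - 1) q :=
  (psiH_hasDerivAt m q).deriv

/-- raising: (q − ∂)ψ_m = √(2m+2) ψ_{m+1} -/
lemma psiH_up (m : ℕ) (q : ℝ) :
    q * psiH m q - deriv (psiH m) q = Real.sqrt (2 * m + 2) * psiH (m + 1) q := by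
  rw [psiH_deriv]
  simp only [psiH_eq]
  have hPH : (PH (m+1)).eval q = 2 * q * (PH m).eval q - (PH m).derivative.eval q := by
    show (Polynomial.C 2 * (Polynomial.X * PH m) - (PH m).derivative).eval q = _
    simp [Polynomial.eval_mul]
    ring
  rw [PH_derivative] at hPH
  have hc := cst_succ m
  have hc2 := cst_mul m
  simp only [Polynomial.eval_mul, Polynomial.eval_C] at hPH
  -- goal: q*(cm e Pm) - (-q*(cm e Pm) + √(2m)*(c(m-1) e P(m-1))) = √(2m+2)*(c(m+1) e P(m+1))
  rw [hPH]
  linear_combination (2*q*Real.exp (-q^2/2)*((PH m).eval q) - 2*(m:ℝ)*Real.exp (-q^2/2)*((PH (m-1)).eval q)) * hc +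
    (Real.exp (-q^2/2)*((PH (m-1)).eval q)) * hc2

/-- lowering: (q + ∂)ψ_m = √(2m) ψ_{m−1} -/
lemma psiH_down (m : ℕ) (q : ℝ) :
    q * psiH m q + deriv (psiH m) q = Real.sqrt (2 * m) * psiH (m - 1) q := by
  rw [psiH_deriv]; ring

lemma psiH_deriv_fun (m : ℕ) :
    deriv (psiH m) = fun q => -q * psiH m q + Real.sqrt (2 * m) * psiH (m - 1) q :=
  funext (psiH_deriv m)

lemma psiH_deriv_hasDerivAt (m : ℕ) (q : ℝ) :
    HasDerivAt (deriv (psiH m))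
      (-psiH m q + -q * deriv (psiH m) q + Real.sqrt (2 * m) * deriv (psiH (m-1)) q) q := by
  have h1 := (hasDerivAt_id q).neg.mul ((psiH_diff m q).hasDerivAt)
  have h2 := ((psiH_diff (m-1) q).hasDerivAt).const_mul (Real.sqrt (2*(m:ℝ)))
  have h3 := h1.add h2
  have hfe : (fun x : ℝ => -x * psiH m x + Real.sqrt (2*(m:ℝ)) * psiH (m-1) x)
      = deriv (psiH m) := (psiH_deriv_fun m).symm
  have h4 : HasDerivAt (fun x : ℝ => -x * psiH m x + Real.sqrt (2*(m:ℝ)) * psiH (m-1) x)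
      (-psiH m q + -q * deriv (psiH m) q + Real.sqrt (2 * m) * deriv (psiH (m-1)) q) q :=
    h3.congr_deriv (by simp only [Pi.neg_apply, id_eq]; ring)
  rw [hfe] at h4
  exact h4

lemma psiH_diff_deriv (m : ℕ) : Differentiable ℝ (deriv (psiH m)) :=
  fun q => (psiH_deriv_hasDerivAt m q).differentiableAt

/-- oscillator: q²ψ_m − ψ_m'' = (2m+1) ψ_m -/
lemma psiH_osc (m : ℕ) (q : ℝ) :
    q^2 * psiH m q - deriv (deriv (psiH m)) q = (2 * m + 1) * psiH m q := by
  rw [(psiH_deriv_hasDerivAt m q).deriv]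
  cases m with
  | zero =>
    simp only [Nat.cast_zero, Nat.zero_sub]
    rw [psiH_deriv]
    push_cast
    simp
    ring
  | succ n =>
    have e1 := psiH_deriv (n+1) q
    have e2 := psiH_deriv n q
    have e3 := psiH_up n q
    have hcast : Real.sqrt (2*((n+1 : ℕ):ℝ)) = Real.sqrt (2*(n:ℝ)+2) := by
      congr 1; push_cast; ring
    have hsq : Real.sqrt (2*(n:ℝ)+2) * Real.sqrt (2*(n:ℝ)+2) = 2*(n:ℝ)+2 :=
      Real.mul_self_sqrt (by positivity)
    rw [Nat.add_sub_cancel, hcast] at e1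
    rw [e2] at e3
    simp only [Nat.add_sub_cancel, hcast]
    rw [e1, e2]
    push_cast
    linear_combination Real.sqrt (2*(n:ℝ)+2) * e3 + psiH (n+1) q * hsq

/-- generic sum of separable terms, `g p` is the q-profile of the p-th term -/
def TS (s : Finset ℕ) (c : ℕ → ℝ) (g : ℕ → ℝ → ℝ) (a b : ℕ → ℕ) : P3 → ℂ :=
  fun r => ∑ p ∈ s, (c p : ℂ) * (g p r.2.2 : ℂ) * zbc r ^ a p * zc r ^ b p

lemma term_hasDerivAt_q (c : ℝ) (g : ℝ → ℝ) (a b : ℕ) (x y q : ℝ)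
    (hg : DifferentiableAt ℝ g q) :
    HasDerivAt (fun t : ℝ => (c:ℂ) * (g t : ℂ) * zbc (x,y,t) ^ a * zc (x,y,t) ^ b)
      ((c:ℂ) * ((deriv g q : ℝ) : ℂ) * zbc (x,y,q) ^ a * zc (x,y,q) ^ b) q := by
  have h := (hg.hasDerivAt).ofReal_comp
  exact ((h.const_mul (c:ℂ)).mul_const (zbc (x,y,q) ^ a)).mul_const (zc (x,y,q) ^ b)

lemma pdq_TS (s : Finset ℕ) (c : ℕ → ℝ) (g : ℕ → ℝ → ℝ) (a b : ℕ → ℕ)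
    (hg : ∀ p, Differentiable ℝ (g p)) :
    pdq (TS s c g a b) = TS s c (fun p => deriv (g p) : ℕ → ℝ → ℝ) a b := by
  funext r
  have := HasDerivAt.fun_sum (u := s)
    (A := fun p t => (c p : ℂ) * (g p t : ℂ) * zbc (r.1,r.2.1,t) ^ a p * zc (r.1,r.2.1,t) ^ b p)
    (A' := fun p => (c p : ℂ) * ((deriv (g p) r.2.2 : ℝ) : ℂ) * zbc r ^ a p * zc r ^ b p)
    (fun p _ => term_hasDerivAt_q (c p) (g p) (a p) (b p) r.1 r.2.1 r.2.2 ((hg p) r.2.2))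
  exact this.deriv

lemma hasDerivAt_cpow {f : ℝ → ℂ} {f' : ℂ} {x : ℝ} (h : HasDerivAt f f' x) (n : ℕ) :
    HasDerivAt (fun t => f t ^ n) ((n:ℂ) * f x ^ (n-1) * f') x := by
  induction n with
  | zero => simpa using hasDerivAt_const x (1:ℂ)
  | succ n ih =>
    have h2 : HasDerivAt (fun t => f t ^ n * f t)
        (((n:ℂ) * f x ^ (n-1) * f') * f x + f x ^ n * f') x := ih.mul h
    have hfn : (fun t => f t ^ (n+1)) = fun t => f t ^ n * f t := by
      funext t; rw [pow_succ]
    rw [hfn]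
    convert h2 using 1
    cases n with
    | zero => simp
    | succ j => push_cast; simp only [Nat.add_sub_cancel, pow_succ]; ring

lemma term_hasDerivAt_x (c : ℝ) (G : ℝ) (a b : ℕ) (x y qq : ℝ) :
    HasDerivAt (fun t : ℝ => (c:ℂ) * (G : ℂ) * zbc (t,y,qq) ^ a * zc (t,y,qq) ^ b)
      ((c:ℂ) * (G : ℂ) * ((a:ℂ) * zbc (x,y,qq) ^ (a-1) * zc (x,y,qq) ^ b
        + (b:ℂ) * zc (x,y,qq) ^ (b-1) * zbc (x,y,qq) ^ a)) x := by
  have hu : HasDerivAt (fun t : ℝ => zbc (t,y,qq)) 1 x := by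
    have := ((hasDerivAt_id x).ofReal_comp (f := fun t : ℝ => t)).sub_const (Complex.I * (y:ℂ))
    exact this
  have hv : HasDerivAt (fun t : ℝ => zc (t,y,qq)) 1 x := by
    have := ((hasDerivAt_id x).ofReal_comp (f := fun t : ℝ => t)).add_const (Complex.I * (y:ℂ))
    exact this
  have hprod := ((hasDerivAt_cpow hu a).fun_mul (hasDerivAt_cpow hv b)).const_mul ((c:ℂ) * (G:ℂ))
  convert hprod using 1
  · rfl
  · funext t; ring
  · ring

lemma term_hasDerivAt_y (c : ℝ) (G : ℝ) (a b : ℕ) (x y qq : ℝ) :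
    HasDerivAt (fun t : ℝ => (c:ℂ) * (G : ℂ) * zbc (x,t,qq) ^ a * zc (x,t,qq) ^ b)
      ((c:ℂ) * (G : ℂ) * ((a:ℂ) * zbc (x,y,qq) ^ (a-1) * zc (x,y,qq) ^ b * (-Complex.I)
        + (b:ℂ) * zc (x,y,qq) ^ (b-1) * zbc (x,y,qq) ^ a * Complex.I)) y := by
  have hu : HasDerivAt (fun t : ℝ => zbc (x,t,qq)) (-Complex.I) y := by
    have := (((hasDerivAt_id y).ofReal_comp (f := fun t : ℝ => t)).const_mul Complex.I).const_sub ((x:ℝ):ℂ)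
    exact this.congr_deriv (by simp)
  have hv : HasDerivAt (fun t : ℝ => zc (x,t,qq)) Complex.I y := by
    have := (((hasDerivAt_id y).ofReal_comp (f := fun t : ℝ => t)).const_mul Complex.I).const_add ((x:ℝ):ℂ)
    exact this.congr_deriv (by simp)
  have hprod := ((hasDerivAt_cpow hu a).fun_mul (hasDerivAt_cpow hv b)).const_mul ((c:ℂ) * (G:ℂ))
  convert hprod using 1
  · rfl
  · funext t; ring
  · ring

lemma pdx_TS (s : Finset ℕ) (c : ℕ → ℝ) (g : ℕ → ℝ → ℝ) (a b : ℕ → ℕ) (r : P3) :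
    pdx (TS s c g a b) r = ∑ p ∈ s, (c p : ℂ) * (g p r.2.2 : ℂ) *
      ((a p : ℂ) * zbc r ^ (a p - 1) * zc r ^ b p
        + (b p : ℂ) * zc r ^ (b p - 1) * zbc r ^ a p) := by
  exact (HasDerivAt.fun_sum (fun p _ =>
    term_hasDerivAt_x (c p) (g p r.2.2) (a p) (b p) r.1 r.2.1 r.2.2)).deriv

lemma pdy_TS (s : Finset ℕ) (c : ℕ → ℝ) (g : ℕ → ℝ → ℝ) (a b : ℕ → ℕ) (r : P3) :
    pdy (TS s c g a b) r = ∑ p ∈ s, (c p : ℂ) * (g p r.2.2 : ℂ) *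
      ((a p : ℂ) * zbc r ^ (a p - 1) * zc r ^ b p * (-Complex.I)
        + (b p : ℂ) * zc r ^ (b p - 1) * zbc r ^ a p * Complex.I) := by
  exact (HasDerivAt.fun_sum (fun p _ =>
    term_hasDerivAt_y (c p) (g p r.2.2) (a p) (b p) r.1 r.2.1 r.2.2)).deriv

lemma wirt1 (C : ℂ) (a b : ℕ) (u v : ℂ) :
    u * ((C * ((a:ℂ)*u^(a-1)*v^b + (b:ℂ)*v^(b-1)*u^a)
      + Complex.I * (C * ((a:ℂ)*u^(a-1)*v^b*(-Complex.I) + (b:ℂ)*v^(b-1)*u^a*Complex.I)))/2)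
      = (a:ℂ) * C * u^a * v^b := by
  have hI : Complex.I*Complex.I = -1 := Complex.I_mul_I
  cases a with
  | zero =>
    push_cast
    ring_nf
    simp only [Complex.I_sq]
    ring
  | succ j =>
    simp only [Nat.add_sub_cancel]
    push_cast
    ring_nf
    simp only [Complex.I_sq]
    ring

lemma wirt2 (C : ℂ) (a b : ℕ) (u v : ℂ) :
    v * ((C * ((a:ℂ)*u^(a-1)*v^b + (b:ℂ)*v^(b-1)*u^a)
      - Complex.I * (C * ((a:ℂ)*u^(a-1)*v^b*(-Complex.I) + (b:ℂ)*v^(b-1)*u^a*Complex.I)))/2)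
      = (b:ℂ) * C * u^a * v^b := by
  have hI : Complex.I*Complex.I = -1 := Complex.I_mul_I
  cases b with
  | zero =>
    push_cast
    ring_nf
    simp only [Complex.I_sq]
    ring
  | succ j =>
    simp only [Nat.add_sub_cancel]
    push_cast
    ring_nf
    simp only [Complex.I_sq]
    ring

lemma wirt3 (C : ℂ) (a b : ℕ) (u v : ℂ) :
    u * ((C * ((a:ℂ)*u^(a-1)*v^b + (b:ℂ)*v^(b-1)*u^a)
      - Complex.I * (C * ((a:ℂ)*u^(a-1)*v^b*(-Complex.I) + (b:ℂ)*v^(b-1)*u^a*Complex.I)))/2)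
      = (b:ℂ) * C * u^(a+1) * v^(b-1) := by
  have hI : Complex.I*Complex.I = -1 := Complex.I_mul_I
  cases b with
  | zero =>
    push_cast
    ring_nf
    simp only [Complex.I_sq]
    ring
  | succ j =>
    simp only [Nat.add_sub_cancel]
    push_cast
    ring_nf
    simp only [Complex.I_sq]
    ring

lemma wirt4 (C : ℂ) (a b : ℕ) (u v : ℂ) :
    v * ((C * ((a:ℂ)*u^(a-1)*v^b + (b:ℂ)*v^(b-1)*u^a)
      + Complex.I * (C * ((a:ℂ)*u^(a-1)*v^b*(-Complex.I) + (b:ℂ)*v^(b-1)*u^a*Complex.I)))/2)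
      = (a:ℂ) * C * u^(a-1) * v^(b+1) := by
  have hI : Complex.I*Complex.I = -1 := Complex.I_mul_I
  cases a with
  | zero =>
    push_cast
    ring_nf
    simp only [Complex.I_sq]
    ring
  | succ j =>
    simp only [Nat.add_sub_cancel]
    push_cast
    ring_nf
    simp only [Complex.I_sq]
    ring

lemma zbc_pdzbar_TS (s : Finset ℕ) (c : ℕ → ℝ) (g : ℕ → ℝ → ℝ) (a b : ℕ → ℕ) (r : P3) :
    zbc r * pdzbar (TS s c g a b) r = TS s (fun p => (a p : ℝ) * c p) g a b r := by
  rw [pdzbar, pdx_TS, pdy_TS, TS, Finset.mul_sum, ← Finset.sum_add_distrib,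
    Finset.sum_div, Finset.mul_sum]
  refine Finset.sum_congr rfl fun p _ => ?_
  push_cast
  linear_combination wirt1 ((c p : ℂ)*(g p r.2.2 : ℂ)) (a p) (b p) (zbc r) (zc r)

lemma zc_pdz_TS (s : Finset ℕ) (c : ℕ → ℝ) (g : ℕ → ℝ → ℝ) (a b : ℕ → ℕ) (r : P3) :
    zc r * pdz (TS s c g a b) r = TS s (fun p => (b p : ℝ) * c p) g a b r := by
  rw [pdz, pdx_TS, pdy_TS, TS, Finset.mul_sum, ← Finset.sum_sub_distrib,
    Finset.sum_div, Finset.mul_sum]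
  refine Finset.sum_congr rfl fun p _ => ?_
  push_cast
  linear_combination wirt2 ((c p : ℂ)*(g p r.2.2 : ℂ)) (a p) (b p) (zbc r) (zc r)

lemma zbc_pdz_TS (s : Finset ℕ) (c : ℕ → ℝ) (g : ℕ → ℝ → ℝ) (a b : ℕ → ℕ) (r : P3) :
    zbc r * pdz (TS s c g a b) r
      = TS s (fun p => (b p : ℝ) * c p) g (fun p => a p + 1) (fun p => b p - 1) r := by
  rw [pdz, pdx_TS, pdy_TS, TS, Finset.mul_sum, ← Finset.sum_sub_distrib,
    Finset.sum_div, Finset.mul_sum]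
  refine Finset.sum_congr rfl fun p _ => ?_
  push_cast
  linear_combination wirt3 ((c p : ℂ)*(g p r.2.2 : ℂ)) (a p) (b p) (zbc r) (zc r)

lemma zc_pdzbar_TS (s : Finset ℕ) (c : ℕ → ℝ) (g : ℕ → ℝ → ℝ) (a b : ℕ → ℕ) (r : P3) :
    zc r * pdzbar (TS s c g a b) r
      = TS s (fun p => (a p : ℝ) * c p) g (fun p => a p - 1) (fun p => b p + 1) r := by
  rw [pdzbar, pdx_TS, pdy_TS, TS, Finset.mul_sum, ← Finset.sum_add_distrib,
    Finset.sum_div, Finset.mul_sum]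
  refine Finset.sum_congr rfl fun p _ => ?_
  push_cast
  linear_combination wirt4 ((c p : ℂ)*(g p r.2.2 : ℂ)) (a p) (b p) (zbc r) (zc r)

lemma Qm_TS (s : Finset ℕ) (c : ℕ → ℝ) (m : ℕ → ℕ) (a b : ℕ → ℕ) :
    Qm (TS s c (fun p => psiH (m p)) a b)
      = TS s (fun p => Real.sqrt (2*(m p)+2) * c p) (fun p => psiH (m p + 1)) a b := by
  funext r
  show (r.2.2:ℂ) * TS s c (fun p => psiH (m p)) a b r
      - pdq (TS s c (fun p => psiH (m p)) a b) r = _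
  rw [pdq_TS s c (fun p => psiH (m p)) a b (fun p => psiH_diff (m p))]
  rw [TS, TS, TS, Finset.mul_sum, ← Finset.sum_sub_distrib]
  refine Finset.sum_congr rfl fun p _ => ?_
  have key := congrArg (fun t : ℝ => (t:ℂ)) (psiH_up (m p) r.2.2)
  push_cast at key ⊢
  linear_combination ((c p : ℂ) * zbc r ^ (a p) * zc r ^ (b p)) * key

lemma Qp_TS (s : Finset ℕ) (c : ℕ → ℝ) (m : ℕ → ℕ) (a b : ℕ → ℕ) :
    Qp (TS s c (fun p => psiH (m p)) a b)
      = TS s (fun p => Real.sqrt (2*(m p)) * c p) (fun p => psiH (m p - 1)) a b := by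
  funext r
  show (r.2.2:ℂ) * TS s c (fun p => psiH (m p)) a b r
      + pdq (TS s c (fun p => psiH (m p)) a b) r = _
  rw [pdq_TS s c (fun p => psiH (m p)) a b (fun p => psiH_diff (m p))]
  rw [TS, TS, TS, Finset.mul_sum, ← Finset.sum_add_distrib]
  refine Finset.sum_congr rfl fun p _ => ?_
  have key := congrArg (fun t : ℝ => (t:ℂ)) (psiH_down (m p) r.2.2)
  push_cast at key ⊢
  linear_combination ((c p : ℂ) * zbc r ^ (a p) * zc r ^ (b p)) * key

lemma osc_TS (s : Finset ℕ) (c : ℕ → ℝ) (m : ℕ → ℕ) (a b : ℕ → ℕ) (r : P3) :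
    (r.2.2:ℂ)^2 * TS s c (fun p => psiH (m p)) a b r
        - pdq (pdq (TS s c (fun p => psiH (m p)) a b)) r
      = TS s (fun p => (2*(m p)+1) * c p) (fun p => psiH (m p)) a b r := by
  rw [pdq_TS s c (fun p => psiH (m p)) a b (fun p => psiH_diff (m p))]
  rw [pdq_TS s c (fun p => deriv (psiH (m p))) a b (fun p => psiH_diff_deriv (m p))]
  rw [TS, TS, TS, Finset.mul_sum, ← Finset.sum_sub_distrib]
  refine Finset.sum_congr rfl fun p _ => ?_
  have key := congrArg (fun t : ℝ => (t:ℂ)) (psiH_osc (m p) r.2.2)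
  push_cast at key ⊢
  linear_combination ((c p : ℂ) * zbc r ^ (a p) * zc r ^ (b p)) * key

lemma Htc_TS (s : Finset ℕ) (c : ℕ → ℝ) (m : ℕ → ℕ) (a b : ℕ → ℕ) (r : P3) :
    Htc (TS s c (fun p => psiH (m p)) a b) r
      = TS s (fun p => ((a p : ℝ) - (b p : ℝ) + (m p : ℝ) + 1/2) * c p)
          (fun p => psiH (m p)) a b r := by
  rw [Htc, zbc_pdzbar_TS, zc_pdz_TS]
  have hosc := osc_TS s c m a b r
  rw [hosc, TS, TS, TS, TS, Finset.mul_sum, ← Finset.sum_sub_distrib, ← Finset.sum_add_distrib]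
  refine Finset.sum_congr rfl fun p _ => ?_
  push_cast
  ring

lemma Xtc_TS (s : Finset ℕ) (c : ℕ → ℝ) (m : ℕ → ℕ) (a b : ℕ → ℕ) (r : P3) :
    Xtc (TS s c (fun p => psiH (m p)) a b) r
      = Complex.I * TS s (fun p => (b p : ℝ) * c p) (fun p => psiH (m p))
            (fun p => a p + 1) (fun p => b p - 1) r
        + (Complex.I/4) * TS s
            (fun p => Real.sqrt (2*((m p + 1 : ℕ):ℝ)+2) * (Real.sqrt (2*(m p)+2) * c p))
            (fun p => psiH (m p + 1 + 1)) a b r := by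
  rw [Xtc, Qm_TS, Qm_TS, mul_assoc, zbc_pdz_TS]

lemma Ytc_TS (s : Finset ℕ) (c : ℕ → ℝ) (m : ℕ → ℕ) (a b : ℕ → ℕ) (r : P3) :
    Ytc (TS s c (fun p => psiH (m p)) a b) r
      = -Complex.I * TS s (fun p => (a p : ℝ) * c p) (fun p => psiH (m p))
            (fun p => a p - 1) (fun p => b p + 1) r
        + (Complex.I/4) * TS s
            (fun p => Real.sqrt (2*((m p - 1 : ℕ):ℝ)) * (Real.sqrt (2*(m p)) * c p))
            (fun p => psiH (m p - 1 - 1)) a b r := by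
  rw [Ytc, Qp_TS, Qp_TS, neg_mul, neg_mul, mul_assoc, zc_pdzbar_TS, neg_mul]

lemma dfac_pos (m : ℤ) : 0 < dfac m := by
  unfold dfac
  split
  · norm_num
  · exact_mod_cast Nat.doubleFactorial_pos _

lemma dfac_step (m : ℤ) (hm : -1 ≤ m) : dfac (m+2) = ((m:ℝ)+2) * dfac m := by
  rcases eq_or_lt_of_le hm with h | h
  · rw [← h]; norm_num [dfac]
  · have h0 : 0 ≤ m := by omega
    obtain ⟨n, rfl⟩ := Int.eq_ofNat_of_zero_le h0
    unfold dfac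
    rw [if_neg (by omega)]
    rcases Nat.eq_zero_or_pos n with rfl | hn
    · norm_num [Nat.doubleFactorial, show (2:ℤ).toNat = 2 from rfl]
    · rw [if_neg (by omega)]
      have : ((n:ℤ)+2).toNat = n + 2 := by omega
      rw [this, Nat.doubleFactorial_add_two]
      push_cast [show (n:ℤ).toNat = n by omega]
      ring

/-- guarded coefficient -/
def gc (h : ℕ) (k : ℤ) (p : ℕ) : ℝ :=
  if (p:ℤ) < -k then 0 else
    Real.sqrt (dfac (2*k+2*(p:ℤ)-1)/dfac (2*k+2*(p:ℤ))) * (h.choose p)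

lemma gc_of_ge (h : ℕ) (k : ℤ) (p : ℕ) (hp : -k ≤ (p:ℤ)) :
    gc h k p = Real.sqrt (dfac (2*k+2*(p:ℤ)-1)/dfac (2*k+2*(p:ℤ))) * (h.choose p) := by
  rw [gc, if_neg (by omega)]

lemma gc_of_lt (h : ℕ) (k : ℤ) (p : ℕ) (hp : (p:ℤ) < -k) : gc h k p = 0 := by
  rw [gc, if_pos hp]

/-- the square-root coefficient step, raising form:
`(1/4)·√(2n+4)·√(2n+2)·√(dfac(n−1)/dfac n) = ((n+2)/2)·√(dfac(n+1)/dfac(n+2))` -/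
lemma sqrt_step_up (n : ℕ) :
    (1/4) * (Real.sqrt (2*(n:ℝ)+4) * (Real.sqrt (2*(n:ℝ)+2) *
        Real.sqrt (dfac ((n:ℤ)-1)/dfac (n:ℤ))))
      = (((n:ℝ)+2)/2) * Real.sqrt (dfac ((n:ℤ)+1)/dfac ((n:ℤ)+2)) := by
  have d1 : dfac ((n:ℤ)+1) = ((n:ℝ)+1) * dfac ((n:ℤ)-1) := by
    have := dfac_step ((n:ℤ)-1) (by omega)
    rw [show (n:ℤ)-1+2 = (n:ℤ)+1 by ring] at this
    rw [this]; push_cast; ring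
  have d2 : dfac ((n:ℤ)+2) = ((n:ℝ)+2) * dfac (n:ℤ) := by
    have := dfac_step (n:ℤ) (by omega)
    rw [this]; push_cast; ring
  have hd0 := dfac_pos (n:ℤ)
  have hd1 := dfac_pos ((n:ℤ)-1)
  rw [← Real.sqrt_mul (by positivity), ← Real.sqrt_mul (by positivity)]
  have harg : (2*(n:ℝ)+4) * ((2*(n:ℝ)+2) * (dfac ((n:ℤ)-1)/dfac (n:ℤ)))
      = (2*((n:ℝ)+2))^2 * (dfac ((n:ℤ)+1)/dfac ((n:ℤ)+2)) := by
    rw [d1, d2]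
    field_simp
    ring
  rw [harg, Real.sqrt_mul (by positivity), Real.sqrt_sq (by positivity)]
  ring

/-- lowering form, for `n ≥ 2`:
`(1/4)·√(2(n−1))·√(2n)·√(dfac(n−1)/dfac n) = ((n−1)/2)·√(dfac(n−3)/dfac(n−2))` -/
lemma sqrt_step_down (n : ℕ) (hn : 2 ≤ n) :
    (1/4) * (Real.sqrt (2*((n-1:ℕ):ℝ)) * (Real.sqrt (2*(n:ℝ)) *
        Real.sqrt (dfac ((n:ℤ)-1)/dfac (n:ℤ))))
      = (((n:ℝ)-1)/2) * Real.sqrt (dfac ((n:ℤ)-3)/dfac ((n:ℤ)-2)) := by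
  have hc : ((n-1:ℕ):ℝ) = (n:ℝ)-1 := by
    have : 1 ≤ n := by omega
    push_cast [this]; ring
  have d1 : dfac ((n:ℤ)-1) = ((n:ℝ)-1) * dfac ((n:ℤ)-3) := by
    have := dfac_step ((n:ℤ)-3) (by omega)
    rw [show (n:ℤ)-3+2 = (n:ℤ)-1 by ring] at this
    rw [this]; push_cast; ring
  have d2 : dfac (n:ℤ) = (n:ℝ) * dfac ((n:ℤ)-2) := by
    have := dfac_step ((n:ℤ)-2) (by omega)
    rw [show (n:ℤ)-2+2 = (n:ℤ) by ring] at this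
    rw [this]; push_cast; ring
  have hd0 := dfac_pos ((n:ℤ)-2)
  have hd1 := dfac_pos ((n:ℤ)-3)
  have hn1 : (1:ℝ) ≤ (n:ℝ) := by exact_mod_cast Nat.one_le_cast.mpr (by omega)
  rw [hc, ← Real.sqrt_mul (by linarith : (0:ℝ) ≤ 2*(n:ℝ)), ← Real.sqrt_mul (by linarith : (0:ℝ) ≤ 2*((n:ℝ)-1))]
  have harg : (2*((n:ℝ)-1)) * ((2*(n:ℝ)) * (dfac ((n:ℤ)-1)/dfac (n:ℤ)))
      = (2*((n:ℝ)-1))^2 * (dfac ((n:ℤ)-3)/dfac ((n:ℤ)-2)) := by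
    rw [d1, d2]
    have hnne : (n:ℝ) ≠ 0 := by linarith
    field_simp
  rw [harg, Real.sqrt_mul (by positivity), Real.sqrt_sq (by linarith)]
  ring

def mIdx (k : ℤ) (p : ℕ) : ℕ := (2*k+2*(p:ℤ)).toNat

lemma dfac_nonpos (m : ℤ) (hm : m ≤ 0) : dfac m = 1 := if_pos hm

lemma choose_cast_succ (h p : ℕ) (hp : p ≤ h) :
    ((p:ℝ)+1) * (h.choose (p+1) : ℝ) = ((h:ℝ)-(p:ℝ)) * (h.choose p : ℝ) := by
  have := Nat.choose_succ_right_eq h p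
  have hc : ((h.choose (p+1) * (p+1) : ℕ) : ℝ) = ((h.choose p * (h - p) : ℕ) : ℝ) := by
    rw [this]
  push_cast [Nat.cast_sub hp] at hc
  linarith [hc]

lemma xident (h : ℕ) (k : ℤ) (p : ℕ) (hp : p ≤ h) (hg : -(k+1) ≤ (p:ℤ)) :
    ((p:ℝ)+1) * gc h k (p+1)
      + (1/4) * (Real.sqrt (2*((mIdx k p + 1:ℕ):ℝ)+2) *
          (Real.sqrt (2*((mIdx k p:ℕ):ℝ)+2) * gc h k p))
      = ((h:ℝ)+(k:ℝ)+1) * gc h (k+1) p := by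
  have cb := choose_cast_succ h p hp
  rcases lt_or_ge (p:ℤ) (-k) with hlt | hge
  · -- boundary case p = -k-1
    have hpk : (p:ℤ) = -k-1 := by omega
    rw [gc_of_lt h k p hlt]
    rw [gc_of_ge h k (p+1) (by push_cast; omega), gc_of_ge h (k+1) p (by omega)]
    rw [show 2*k+2*((p+1:ℕ):ℤ)-1 = -1 by push_cast; omega,
        show 2*k+2*((p+1:ℕ):ℤ) = 0 by push_cast; omega,
        show 2*(k+1)+2*(p:ℤ)-1 = -1 by omega,
        show 2*(k+1)+2*(p:ℤ) = 0 by omega]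
    rw [dfac_nonpos _ (by norm_num), dfac_nonpos _ (by norm_num)]
    norm_num
    have hk : (k:ℝ) = -(p:ℝ)-1 := by exact_mod_cast congrArg (fun t : ℤ => (t:ℝ)) (by omega : k = -(p:ℤ)-1)
    rw [hk]
    linear_combination cb
  · -- main case
    set n : ℕ := mIdx k p with hn
    have hnz : (n:ℤ) = 2*k+2*(p:ℤ) := by
      rw [hn, mIdx]; omega
    have e1 : 2*k+2*((p+1:ℕ):ℤ)-1 = (n:ℤ)+1 := by push_cast; omega
    have e2 : 2*k+2*((p+1:ℕ):ℤ) = (n:ℤ)+2 := by push_cast; omega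
    have e3 : 2*k+2*(p:ℤ)-1 = (n:ℤ)-1 := by omega
    have e4 : 2*k+2*(p:ℤ) = (n:ℤ) := by omega
    have e5 : 2*(k+1)+2*(p:ℤ)-1 = (n:ℤ)+1 := by omega
    have e6 : 2*(k+1)+2*(p:ℤ) = (n:ℤ)+2 := by omega
    rw [gc_of_ge h k (p+1) (by push_cast; omega), gc_of_ge h k p hge,
        gc_of_ge h (k+1) p (by omega), e1, e2, e3, e4, e5, e6]
    have hcast : ((n+1:ℕ):ℝ) = (n:ℝ)+1 := by push_cast; ring
    rw [hcast, show 2*((n:ℝ)+1)+2 = 2*(n:ℝ)+4 by ring]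
    have su := sqrt_step_up n
    have hnr : (n:ℝ) = 2*(k:ℝ)+2*(p:ℝ) := by exact_mod_cast congrArg (fun t : ℤ => (t:ℝ)) hnz
    linear_combination (Real.sqrt (dfac ((n:ℤ)+1)/dfac ((n:ℤ)+2))) * cb
      + ((h.choose p : ℝ)) * su
      + (Real.sqrt (dfac ((n:ℤ)+1)/dfac ((n:ℤ)+2)) * (h.choose p : ℝ) / 2) * hnr

lemma choose_cast_pred (h p : ℕ) (hp : p ≤ h) (hp1 : 1 ≤ p) :
    ((h:ℝ)-(p:ℝ)+1) * (h.choose (p-1) : ℝ) = (p:ℝ) * (h.choose p : ℝ) := by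
  have := Nat.choose_succ_right_eq h (p-1)
  rw [show p - 1 + 1 = p by omega] at this
  have hc : ((h.choose p * p : ℕ) : ℝ) = ((h.choose (p-1) * (h - (p-1)) : ℕ) : ℝ) := by
    rw [this]
  push_cast [Nat.cast_sub (show p-1 ≤ h by omega), Nat.cast_sub hp1] at hc
  linarith [hc]

lemma yident (h : ℕ) (k : ℤ) (p : ℕ) (hp : p ≤ h) (hp1 : 1 ≤ p) (hg : -k+1 ≤ (p:ℤ)) :
    -((h:ℝ)-(p:ℝ)+1) * gc h k (p-1)
      + (1/4) * (Real.sqrt (2*((mIdx k p - 1:ℕ):ℝ)) *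
          (Real.sqrt (2*((mIdx k p:ℕ):ℝ)) * gc h k p))
      = ((k:ℝ)-1/2) * gc h (k-1) p := by
  have cb := choose_cast_pred h p hp hp1
  set n : ℕ := mIdx k p with hn
  have hnz : (n:ℤ) = 2*k+2*(p:ℤ) := by rw [hn, mIdx]; omega
  have hn2 : 2 ≤ n := by omega
  have e1 : 2*k+2*((p-1:ℕ):ℤ)-1 = (n:ℤ)-3 := by
    rw [show ((p-1:ℕ):ℤ) = (p:ℤ)-1 by omega]; omega
  have e2 : 2*k+2*((p-1:ℕ):ℤ) = (n:ℤ)-2 := by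
    rw [show ((p-1:ℕ):ℤ) = (p:ℤ)-1 by omega]; omega
  have e3 : 2*k+2*(p:ℤ)-1 = (n:ℤ)-1 := by omega
  have e4 : 2*k+2*(p:ℤ) = (n:ℤ) := by omega
  have e5 : 2*(k-1)+2*(p:ℤ)-1 = (n:ℤ)-3 := by omega
  have e6 : 2*(k-1)+2*(p:ℤ) = (n:ℤ)-2 := by omega
  rw [gc_of_ge h k (p-1) (by rw [show ((p-1:ℕ):ℤ) = (p:ℤ)-1 by omega]; omega),
      gc_of_ge h k p (by omega), gc_of_ge h (k-1) p (by omega),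
      e1, e2, e3, e4, e5, e6]
  have sd := sqrt_step_down n hn2
  have hnr : (n:ℝ) = 2*(k:ℝ)+2*(p:ℝ) := by exact_mod_cast congrArg (fun t : ℤ => (t:ℝ)) hnz
  linear_combination (-(Real.sqrt (dfac ((n:ℤ)-3)/dfac ((n:ℤ)-2)))) * cb
    + ((h.choose p : ℝ)) * sd
    + (Real.sqrt (dfac ((n:ℤ)-3)/dfac ((n:ℤ)-2)) * (h.choose p : ℝ) / 2) * hnr

lemma yident0 (h : ℕ) (k : ℤ) (hk : 1 ≤ k) :
    (1/4) * (Real.sqrt (2*((mIdx k 0 - 1:ℕ):ℝ)) *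
        (Real.sqrt (2*((mIdx k 0:ℕ):ℝ)) * gc h k 0))
      = ((k:ℝ)-1/2) * gc h (k-1) 0 := by
  set n : ℕ := mIdx k 0 with hn
  have hnz : (n:ℤ) = 2*k := by rw [hn, mIdx]; omega
  have hn2 : 2 ≤ n := by omega
  have e3 : 2*k+2*((0:ℕ):ℤ)-1 = (n:ℤ)-1 := by push_cast; omega
  have e4 : 2*k+2*((0:ℕ):ℤ) = (n:ℤ) := by push_cast; omega
  have e5 : 2*(k-1)+2*((0:ℕ):ℤ)-1 = (n:ℤ)-3 := by push_cast; omega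
  have e6 : 2*(k-1)+2*((0:ℕ):ℤ) = (n:ℤ)-2 := by push_cast; omega
  rw [gc_of_ge h k 0 (by push_cast; omega), gc_of_ge h (k-1) 0 (by push_cast; omega),
      e3, e4, e5, e6]
  have sd := sqrt_step_down n hn2
  have hnr : (n:ℝ) = 2*(k:ℝ) := by exact_mod_cast congrArg (fun t : ℤ => (t:ℝ)) hnz
  linear_combination ((h.choose 0 : ℝ)) * sd
    + (Real.sqrt (dfac ((n:ℤ)-3)/dfac ((n:ℤ)-2)) * (h.choose 0 : ℝ) / 2) * hnr

lemma gc_top (h : ℕ) (k : ℤ) (p : ℕ) (hp : h < p) : gc h k p = 0 := by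
  unfold gc
  split
  · rfl
  · rw [Nat.choose_eq_zero_of_lt hp]; simp

lemma shift_sum (h : ℕ) (f : ℕ → ℂ) (hf0 : f 0 = 0) (ftop : f (h+1) = 0) :
    ∑ p ∈ Finset.range (h+1), f p = ∑ p ∈ Finset.range (h+1), (fun p => f (p+1)) p := by
  rw [Finset.sum_range_succ' f h, hf0, add_zero,
    Finset.sum_range_succ (fun p => f (p+1)) h, ftop, add_zero]

lemma sE_TS (h : ℕ) (k : ℤ) :
    sE h k = TS (Finset.range (h+1)) (gc h k)
      (fun p => psiH (mIdx k p)) (fun p => h - p) (fun p => p) := by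
  funext r
  rw [sE, TS]
  have hsub : Finset.Icc (-k).toNat h ⊆ Finset.range (h+1) := by
    intro p hp
    rw [Finset.mem_Icc] at hp
    rw [Finset.mem_range]
    omega
  rw [← Finset.sum_subset hsub (fun p hpr hpn => ?_)]
  · refine Finset.sum_congr rfl fun p hp => ?_
    rw [Finset.mem_Icc] at hp
    have hge : -k ≤ (p:ℤ) := by
      have := Int.self_le_toNat (-k)
      omega
    rw [gc_of_ge h k p hge, mIdx]
    push_cast
    ring
  · rw [Finset.mem_range] at hpr
    rw [Finset.mem_Icc] at hpn
    have : (p:ℤ) < -k := by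
      have h2 : p < (-k).toNat := by omega
      omega
    rw [gc_of_lt h k p this]
    simp

lemma Hgen (h : ℕ) (k : ℤ) : ∀ r, Htc (sE h k) r = ((h : ℂ) + 2 * (k : ℂ) + 1 / 2) * sE h k r := by
  intro r
  rw [sE_TS, Htc_TS, TS, TS, Finset.mul_sum]
  refine Finset.sum_congr rfl fun p hp => ?_
  rw [Finset.mem_range] at hp
  rcases lt_or_ge (p:ℤ) (-k) with hlt | hge
  · rw [gc_of_lt h k p hlt]
    simp
  · have hm : ((mIdx k p : ℕ):ℝ) = 2*(k:ℝ)+2*(p:ℝ) := by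
      have h1 : ((mIdx k p : ℕ):ℤ) = 2*k+2*(p:ℤ) := by rw [mIdx]; omega
      exact_mod_cast congrArg (fun t : ℤ => (t:ℝ)) h1
    have hhp : ((h - p:ℕ):ℝ) = (h:ℝ) - (p:ℝ) := by
      push_cast [Nat.cast_sub (by omega : p ≤ h)]; ring
    have hco : ((h - p:ℕ):ℝ) - (p:ℝ) + ((mIdx k p : ℕ):ℝ) + 1/2
        = (h:ℝ) + 2*(k:ℝ) + 1/2 := by rw [hm, hhp]; ring
    rw [hco]
    push_cast
    ring

lemma Xgen (h : ℕ) (k : ℤ) :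
    ∀ r, Xtc (sE h k) r = Complex.I * ((h : ℂ) + (k : ℂ) + 1) * sE h (k + 1) r := by
  intro r
  rw [sE_TS h k, Xtc_TS, sE_TS h (k+1), TS, TS, TS]
  have hshift : ∑ p ∈ Finset.range (h+1),
      ((((p:ℕ) : ℝ) * gc h k p : ℝ) : ℂ) * (psiH (mIdx k p) r.2.2 : ℂ)
        * zbc r ^ (h - p + 1) * zc r ^ (p - 1)
      = ∑ p ∈ Finset.range (h+1),
      ((((p+1:ℕ) : ℝ) * gc h k (p+1) : ℝ) : ℂ) * (psiH (mIdx k (p+1)) r.2.2 : ℂ)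
        * zbc r ^ (h - (p+1) + 1) * zc r ^ (p+1-1) := by
    exact shift_sum h _ (by norm_num) (by rw [gc_top h k (h+1) (by omega)]; norm_num)
  have hexp : ∑ p ∈ Finset.range (h+1),
      ((((p+1:ℕ) : ℝ) * gc h k (p+1) : ℝ) : ℂ) * (psiH (mIdx k (p+1)) r.2.2 : ℂ)
        * zbc r ^ (h - (p+1) + 1) * zc r ^ (p+1-1)
      = ∑ p ∈ Finset.range (h+1),
      ((((p+1:ℕ) : ℝ) * gc h k (p+1) : ℝ) : ℂ) * (psiH (mIdx k (p+1)) r.2.2 : ℂ)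
        * zbc r ^ (h - p) * zc r ^ p := by
    refine Finset.sum_congr rfl fun p hp => ?_
    rw [Finset.mem_range] at hp
    rcases Nat.lt_or_ge p h with hlt | hge
    · rw [show h - (p+1) + 1 = h - p by omega]; rfl
    · rw [show p = h by omega, gc_top h k (h+1) (by omega)]
      norm_num
  rw [hshift, hexp, Finset.mul_sum, Finset.mul_sum, Finset.mul_sum, ← Finset.sum_add_distrib]
  refine Finset.sum_congr rfl fun p hp => ?_
  rw [Finset.mem_range] at hp
  have hp' : p ≤ h := by omega
  rcases lt_or_ge (p:ℤ) (-(k+1)) with hlt | hge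
  · -- everything vanishes
    rw [gc_of_lt h k (p+1) (by push_cast; omega), gc_of_lt h k p (by omega),
        gc_of_lt h (k+1) p (by omega)]
    simp
  · have key := xident h k p hp' (by omega)
    have keyC := congrArg (fun t : ℝ => (t:ℂ)) key
    rcases lt_or_ge (p:ℤ) (-k) with hcc | hcc
    · -- boundary p = -k-1
      have h1 : mIdx k (p+1) = 0 := by rw [mIdx]; omega
      have h2 : mIdx (k+1) p = 0 := by rw [mIdx]; omega
      rw [h1, h2, gc_of_lt h k p hcc] at *
      simp only [mul_zero, Complex.ofReal_zero, zero_mul, add_zero] at keyC ⊢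
      push_cast at keyC ⊢
      linear_combination (Complex.I * (psiH 0 r.2.2 : ℂ) * zbc r ^ (h-p) * zc r ^ p) * keyC
    · -- main case
      have h1 : mIdx k (p+1) = mIdx k p + 1 + 1 := by rw [mIdx, mIdx]; omega
      have h2 : mIdx (k+1) p = mIdx k p + 1 + 1 := by rw [mIdx, mIdx]; omega
      rw [h1, h2]
      push_cast at keyC ⊢
      linear_combination (Complex.I * (psiH (mIdx k p + 1 + 1) r.2.2 : ℂ)
        * zbc r ^ (h-p) * zc r ^ p) * keyC

lemma Ygen (h : ℕ) (k : ℤ) :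
    ∀ r, Ytc (sE h k) r = Complex.I * ((k:ℂ) - 1/2) * sE h (k-1) r := by
  intro r
  rw [sE_TS h k, Ytc_TS, sE_TS h (k-1), TS, TS, TS]
  set V : ℕ → ℂ := fun p => if p = 0 then (0:ℂ) else
    (((h-(p-1):ℕ):ℝ) * gc h k (p-1) : ℝ) * (psiH (mIdx k (p-1)) r.2.2 : ℂ)
      * zbc r ^ (h-(p-1)-1) * zc r ^ ((p-1)+1) with hVdef
  have hU : ∑ p ∈ Finset.range (h+1),
      ((((h-p:ℕ):ℝ) * gc h k p : ℝ) : ℂ) * (psiH (mIdx k p) r.2.2 : ℂ)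
        * zbc r ^ (h - p - 1) * zc r ^ (p+1)
      = ∑ p ∈ Finset.range (h+1), V p := by
    have h1 : ∑ p ∈ Finset.range (h+1), V p
        = ∑ p ∈ Finset.range (h+1), (fun p => V (p+1)) p := by
      refine shift_sum h V (if_pos rfl) ?_
      rw [hVdef]
      simp only [if_neg (Nat.succ_ne_zero h), Nat.add_sub_cancel, Nat.sub_self]
      norm_num
    have h2 : ∀ p, V (p+1) = (((h-p:ℕ):ℝ) * gc h k p : ℝ) * (psiH (mIdx k p) r.2.2 : ℂ)
        * zbc r ^ (h - p - 1) * zc r ^ (p+1) := by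
      intro p
      rw [hVdef]
      simp only [if_neg (Nat.succ_ne_zero p), Nat.add_sub_cancel]
    rw [h1]
    exact (Finset.sum_congr rfl fun p _ => (h2 p)).symm
  rw [hU, Finset.mul_sum, Finset.mul_sum, Finset.mul_sum, ← Finset.sum_add_distrib]
  refine Finset.sum_congr rfl fun p hp => ?_
  rw [Finset.mem_range] at hp
  have hp' : p ≤ h := by omega
  by_cases hp0 : p = 0
  · subst hp0
    rw [hVdef]
    simp only [if_pos rfl, mul_zero]
    rcases le_or_gt 1 k with hk1 | hk1
    · -- k ≥ 1 : yident0
      have key := yident0 h k hk1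
      have h2 : mIdx (k-1) 0 = mIdx k 0 - 1 - 1 := by rw [mIdx, mIdx]; omega
      rw [h2]
      have keyC := congrArg (fun t : ℝ => (t:ℂ)) key
      push_cast at keyC ⊢
      linear_combination (Complex.I * (psiH (mIdx k 0 - 1 - 1) r.2.2 : ℂ)
        * zbc r ^ (h-0) * zc r ^ 0) * keyC
    · -- k ≤ 0 : both sides vanish
      rw [gc_of_lt h (k-1) 0 (by push_cast; omega),
        show mIdx k 0 = 0 from by rw [mIdx]; omega]
      norm_num
  · have hp1 : 1 ≤ p := by omega
    rw [hVdef]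
    simp only [if_neg hp0]
    rw [show h-(p-1)-1 = h-p by omega, show (p-1)+1 = p by omega,
        show h-(p-1) = h-p+1 by omega]
    rcases lt_or_ge (p:ℤ) (-k+1) with hlt | hge
    · -- vanishing case
      rw [gc_of_lt h k (p-1) (by rw [show ((p-1:ℕ):ℤ) = (p:ℤ)-1 by omega]; omega),
          gc_of_lt h (k-1) p (by omega),
          show mIdx k p = 0 from by rw [mIdx]; omega]
      norm_num
    · -- main case
      have key := yident h k p hp' hp1 hge
      have h2 : mIdx (k-1) p = mIdx k p - 1 - 1 := by rw [mIdx, mIdx]; omega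
      have h3 : mIdx k (p-1) = mIdx k p - 1 - 1 := by
        rw [mIdx, mIdx, show ((p-1:ℕ):ℤ) = (p:ℤ)-1 by omega]; omega
      rw [h2, h3]
      have keyC := congrArg (fun t : ℝ => (t:ℂ)) key
      push_cast [Nat.cast_sub hp'] at keyC ⊢
      linear_combination (Complex.I * (psiH (mIdx k p - 1 - 1) r.2.2 : ℂ)
        * zbc r ^ (h-p) * zc r ^ p) * keyC

lemma sE_bot (h : ℕ) (r : P3) : sE h (-(h:ℤ)-1) r = 0 := by
  rw [sE, show (-(-(h:ℤ)-1)).toNat = h+1 by omega, Finset.Icc_eq_empty (by omega),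
    Finset.sum_empty]

/-- The operators `H_t`, `X_t`, `Y_t` act on the even basis of symplectic monogenics by
`H_t s_{e,k}^h = (h+2k+1/2) s_{e,k}^h`, `X_t s_{e,k}^h = i(h+k+1) s_{e,k+1}^h`,
`Y_t s_{e,k}^h = i(k−1/2) s_{e,k−1}^h` for `k ≠ −h`, and `Y_t s_{e,−h}^h = 0`. -/
theorem mp2_action_on_even_basis (h : ℕ) (k : ℤ) (hk : -(h : ℤ) ≤ k) :
    (∀ p, Htc (sE h k) p = ((h : ℂ) + 2 * (k : ℂ) + 1 / 2) * sE h k p) ∧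
    (∀ p, Xtc (sE h k) p = Complex.I * ((h : ℂ) + (k : ℂ) + 1) * sE h (k + 1) p) ∧
    (k ≠ -(h : ℤ) → ∀ p, Ytc (sE h k) p = Complex.I * ((k : ℂ) - 1 / 2) * sE h (k - 1) p) ∧
    (∀ p, Ytc (sE h (-(h : ℤ))) p = 0) := by
  refine ⟨Hgen h k, Xgen h k, fun _ => Ygen h k, fun p => ?_⟩
  rw [Ygen h (-(h:ℤ)) p, show -(h:ℤ)-1 = -(h:ℤ)-1 from rfl, sE_bot h p, mul_zero]
end
end
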